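/- Let n ≥ 2, let L = {y ∈ ℝⁿ : y₁ ≥ √(y₂² + ⋯ + yₙ²)} be the Lorentz cone, let J = diag(1, −1, …, −1) ∈ ℝ^{n×n}, and let A ∈ ℝ^{n×n} be a symmetric matrix. Then A is L-copositive (i.e., ⟨Ax, x⟩ ≥ 0 for all x ∈ L) if and only if there exists ρ ≥ 0 such that the matrix A − ρJ is positive semidefinite. -/

import Mathlib

open scoped RealInnerProductSpace

/-- The quadratic form `x ↦ ⟨A x, x⟩` associated with a matrix `A`. -/
noncomputable def quadForm {n : ℕ} (A : Matrix (Fin n) (Fin n) ℝ)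
    (x : EuclideanSpace ℝ (Fin n)) : ℝ :=
  ⟪Matrix.toEuclideanLin A x, x⟫

/-- `K` is a cone: closed under multiplication by positive scalars. -/
def IsCone {n : ℕ} (K : Set (EuclideanSpace ℝ (Fin n))) : Prop :=
  ∀ ⦃t : ℝ⦄, 0 < t → ∀ ⦃x⦄, x ∈ K → t • x ∈ K

/-- A proper cone: a pointed closed convex cone with nonempty interior. -/
def IsProperCone {n : ℕ} (K : Set (EuclideanSpace ℝ (Fin n))) : Prop :=
  IsCone K ∧ Convex ℝ K ∧ IsClosed K ∧ K ∩ (-K) ⊆ {0} ∧ (interior K).Nonempty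

/-- The dual cone `K* = {u : ⟨u, y⟩ ≥ 0 for all y ∈ K}`. -/
def dualCone {n : ℕ} (K : Set (EuclideanSpace ℝ (Fin n))) : Set (EuclideanSpace ℝ (Fin n)) :=
  {u | ∀ y ∈ K, 0 ≤ ⟪u, y⟫}

/-- The sublevel set `[φ_A ≤ c] = {x ∈ int K : ⟨A x, x⟩ ≤ c ‖x‖²}`. -/
noncomputable def sublevel {n : ℕ} (A : Matrix (Fin n) (Fin n) ℝ)
    (K : Set (EuclideanSpace ℝ (Fin n))) (c : ℝ) : Set (EuclideanSpace ℝ (Fin n)) :=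
  {x ∈ interior K | quadForm A x ≤ c * ‖x‖ ^ 2}

/-- `‖x²‖² = x₂² + ⋯ + xₙ²`, the squared norm of the tail of `x`. -/
noncomputable def tailNormSq {n : ℕ} [NeZero n] (x : EuclideanSpace ℝ (Fin n)) : ℝ :=
  ∑ i ∈ Finset.univ.erase 0, x i ^ 2

/-- The Lorentz cone `{y : √(y₂² + ⋯ + yₙ²) ≤ y₁}`. -/
noncomputable def lorentzCone (n : ℕ) [NeZero n] : Set (EuclideanSpace ℝ (Fin n)) :=
  {y | Real.sqrt (tailNormSq y) ≤ y 0}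

namespace SLem

open Matrix

/-- The quadratic form at the pi-type level. -/
def qd {n : ℕ} (M : Matrix (Fin n) (Fin n) ℝ) (v : Fin n → ℝ) : ℝ :=
  dotProduct v (M *ᵥ v)

/-- The matrix `J = diag(1, -1, …, -1)`. -/
def Jmat (n : ℕ) [NeZero n] : Matrix (Fin n) (Fin n) ℝ :=
  Matrix.diagonal (fun i : Fin n => if i = 0 then (1 : ℝ) else -1)

variable {n : ℕ}

lemma qd_smul (M : Matrix (Fin n) (Fin n) ℝ) (t : ℝ) (v : Fin n → ℝ) :
    qd M (t • v) = t ^ 2 * qd M v := by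
  simp only [qd, Matrix.mulVec_smul, dotProduct_smul, smul_dotProduct,
    smul_eq_mul]
  ring

lemma qd_neg (M : Matrix (Fin n) (Fin n) ℝ) (v : Fin n → ℝ) :
    qd M (-v) = qd M v := by
  have h : (-v) = (-1 : ℝ) • v := by funext i; simp
  rw [h, qd_smul]; ring

lemma qd_symm_aux (M : Matrix (Fin n) (Fin n) ℝ) (hM : Mᵀ = M) (x y : Fin n → ℝ) :
    dotProduct x (M *ᵥ y) = dotProduct y (M *ᵥ x) := by
  rw [Matrix.dotProduct_mulVec, ← Matrix.mulVec_transpose, hM, dotProduct_comm]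

lemma qd_expand (M : Matrix (Fin n) (Fin n) ℝ) (hM : Mᵀ = M) (a b : ℝ) (x y : Fin n → ℝ) :
    qd M (a • x + b • y) =
      a ^ 2 * qd M x + 2 * a * b * dotProduct x (M *ᵥ y) + b ^ 2 * qd M y := by
  simp only [qd, Matrix.mulVec_add, Matrix.mulVec_smul, dotProduct_add,
    add_dotProduct, dotProduct_smul, smul_dotProduct, smul_eq_mul,
    qd_symm_aux M hM y x]
  ring

variable [NeZero n]

lemma Jmat_transpose : (Jmat n)ᵀ = Jmat n := Matrix.diagonal_transpose _

lemma qd_J (v : Fin n → ℝ) :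
    qd (Jmat n) v = v 0 ^ 2 - ∑ i ∈ Finset.univ.erase 0, v i ^ 2 := by
  have h0 : (0 : Fin n) ∈ (Finset.univ : Finset (Fin n)) := Finset.mem_univ _
  have h : qd (Jmat n) v = ∑ i, v i * ((if i = 0 then (1:ℝ) else -1) * v i) := by
    simp [qd, Jmat, dotProduct, Matrix.mulVec_diagonal]
  rw [h, ← Finset.add_sum_erase _ _ h0]
  have h1 : v 0 * ((if (0:Fin n) = 0 then (1:ℝ) else -1) * v 0) = v 0 ^ 2 := by
    simp; ring
  have h2 : ∑ i ∈ Finset.univ.erase 0, v i * ((if i = 0 then (1:ℝ) else -1) * v i)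
      = -∑ i ∈ Finset.univ.erase 0, v i ^ 2 := by
    rw [← Finset.sum_neg_distrib]
    refine Finset.sum_congr rfl fun i hi => ?_
    rw [if_neg (Finset.ne_of_mem_erase hi)]; ring
  rw [h1, h2]; ring

/-- Rotation lemma: if `qd A ≥ 0` on `{qd J ≥ 0}`, `qd J u = 1`, `qd J w = -1`,
then `qd A u + qd A w ≥ 0`. -/
lemma rot (A : Matrix (Fin n) (Fin n) ℝ) (hA : Aᵀ = A)
    (hq : ∀ v : Fin n → ℝ, 0 ≤ qd (Jmat n) v → 0 ≤ qd A v)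
    (u w : Fin n → ℝ) (hu : qd (Jmat n) u = 1) (hw : qd (Jmat n) w = -1) :
    0 ≤ qd A u + qd A w := by
  set B : ℝ := dotProduct u ((Jmat n) *ᵥ w) with hB
  set f : ℝ → ℝ := fun θ =>
    Real.cos θ ^ 2 - Real.sin θ ^ 2 + 2 * Real.cos θ * Real.sin θ * B with hf
  have hcont : Continuous f := by fun_prop
  have h0 : f 0 = 1 := by simp [hf]
  have hpi : f (Real.pi / 2) = -1 := by simp [hf]
  have hmem : (0 : ℝ) ∈ Set.Icc (f (Real.pi/2)) (f 0) := by
    rw [h0, hpi]; constructor <;> norm_num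
  have hsub := intermediate_value_Icc' (by positivity : (0:ℝ) ≤ Real.pi/2)
    hcont.continuousOn
  obtain ⟨θ, _, hθ⟩ := hsub hmem
  set c : ℝ := Real.cos θ
  set s : ℝ := Real.sin θ
  have hcs : c ^ 2 + s ^ 2 = 1 := by
    rw [add_comm]; exact Real.sin_sq_add_cos_sq θ
  have hz : qd (Jmat n) (c • u + s • w) = 0 := by
    rw [qd_expand _ Jmat_transpose, hu, hw, ← hB]
    have h : c ^ 2 * 1 + 2 * c * s * B + s ^ 2 * (-1) = f θ := by simp [hf]; ring
    rw [h, hθ]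
  have hy : qd (Jmat n) (s • u + (-c) • w) = 0 := by
    rw [qd_expand _ Jmat_transpose, hu, hw, ← hB]
    have h : s ^ 2 * 1 + 2 * s * (-c) * B + (-c) ^ 2 * (-1) = -(f θ) := by
      simp [hf]; ring
    rw [h, hθ, neg_zero]
  have h1 := hq _ hz.ge
  have h2 := hq _ hy.ge
  have hsum : qd A (c • u + s • w) + qd A (s • u + (-c) • w) = qd A u + qd A w := by
    rw [qd_expand _ hA, qd_expand _ hA]
    linear_combination (qd A u + qd A w) * hcs
  linarith

/-- The S-lemma for the Lorentz form. -/
lemma slemma (A : Matrix (Fin n) (Fin n) ℝ) (hA : Aᵀ = A)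
    (hq : ∀ v : Fin n → ℝ, 0 ≤ qd (Jmat n) v → 0 ≤ qd A v) :
    ∃ ρ : ℝ, 0 ≤ ρ ∧ ∀ v : Fin n → ℝ, ρ * qd (Jmat n) v ≤ qd A v := by
  set S : Set ℝ := {r | ∃ v : Fin n → ℝ, qd (Jmat n) v = 1 ∧ qd A v = r} with hS
  have hSne : S.Nonempty := by
    refine ⟨qd A ((Pi.single 0 1 : Fin n → ℝ)), (Pi.single 0 1 : Fin n → ℝ), ?_, rfl⟩
    rw [qd_J]
    have h : ∀ i ∈ Finset.univ.erase (0 : Fin n), (Pi.single 0 1 : Fin n → ℝ) i ^ 2 = 0 := by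
      intro i hi
      rw [Pi.single_eq_of_ne (Finset.ne_of_mem_erase hi)]
      ring
    rw [Finset.sum_congr rfl h]
    simp
  have hSbdd : ∀ r ∈ S, (0:ℝ) ≤ r := by
    rintro r ⟨v, hv1, rfl⟩
    exact hq v (by rw [hv1]; norm_num)
  set ρ : ℝ := sInf S with hρ
  have hρ0 : 0 ≤ ρ := le_csInf hSne hSbdd
  refine ⟨ρ, hρ0, fun v => ?_⟩
  rcases lt_trichotomy (qd (Jmat n) v) 0 with hg | hg | hg
  · -- g v < 0 case
    set t : ℝ := (Real.sqrt (-(qd (Jmat n) v)))⁻¹ with ht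
    have hgpos : 0 < -(qd (Jmat n) v) := by linarith
    have hsq : t ^ 2 = (-(qd (Jmat n) v))⁻¹ := by
      rw [ht, ← Real.sqrt_inv]
      exact Real.sq_sqrt (by positivity)
    have hw : qd (Jmat n) (t • v) = -1 := by
      rw [qd_smul, hsq]
      field_simp
      rw [div_self hg.ne]
    have hwA : -ρ ≤ qd A (t • v) := by
      refine le_of_forall_pos_le_add fun ε hε => ?_
      obtain ⟨r, hrS, hrlt⟩ := Real.lt_sInf_add_pos hSne hε
      obtain ⟨u, hu1, hu2⟩ := hrS
      have h := rot A hA hq u (t • v) hu1 hw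
      rw [hu2] at h
      linarith
    have hAv : qd A (t • v) = (-(qd (Jmat n) v))⁻¹ * qd A v := by
      rw [qd_smul, hsq]
    rw [hAv] at hwA
    have hne : -(qd (Jmat n) v) ≠ 0 := ne_of_gt hgpos
    have h := mul_le_mul_of_nonneg_left hwA (le_of_lt hgpos)
    rw [← mul_assoc, mul_inv_cancel₀ hne, one_mul] at h
    nlinarith
  · rw [hg, mul_zero]
    exact hq v hg.ge
  · -- g v > 0 case
    set t : ℝ := (Real.sqrt (qd (Jmat n) v))⁻¹ with ht
    have hsq : t ^ 2 = (qd (Jmat n) v)⁻¹ := by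
      rw [ht, ← Real.sqrt_inv]
      exact Real.sq_sqrt (by positivity)
    have hmem : qd A (t • v) ∈ S := by
      refine ⟨t • v, ?_, rfl⟩
      rw [qd_smul, hsq]
      field_simp
    have hle : ρ ≤ qd A (t • v) := csInf_le ⟨0, hSbdd⟩ hmem
    rw [qd_smul, hsq] at hle
    have hne : qd (Jmat n) v ≠ 0 := ne_of_gt hg
    have h := mul_le_mul_of_nonneg_left hle (le_of_lt hg)
    rw [← mul_assoc, mul_inv_cancel₀ hne, one_mul] at h
    nlinarith

lemma quadForm_eq' (A : Matrix (Fin n) (Fin n) ℝ) (x : EuclideanSpace ℝ (Fin n)) :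
    quadForm A x = qd A (WithLp.equiv 2 (Fin n → ℝ) x) := by
  simp only [quadForm, qd, Matrix.toEuclideanLin_apply, PiLp.inner_apply,
    RCLike.inner_apply, conj_trivial, dotProduct]
  refine Finset.sum_congr rfl fun i _ => ?_
  simp [mul_comm]

lemma mem_lorentz_iff (w : Fin n → ℝ) :
    (WithLp.equiv 2 (Fin n → ℝ)).symm w ∈ lorentzCone n ↔
      Real.sqrt (∑ i ∈ Finset.univ.erase 0, w i ^ 2) ≤ w 0 := by
  simp only [lorentzCone, Set.mem_setOf_eq, tailNormSq, WithLp.equiv_symm_apply, WithLp.ofLp_toLp]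

lemma tail_nonneg (v : Fin n → ℝ) : (0:ℝ) ≤ ∑ i ∈ Finset.univ.erase 0, v i ^ 2 :=
  Finset.sum_nonneg fun i _ => sq_nonneg _

lemma qd_sub_smul (A : Matrix (Fin n) (Fin n) ℝ) (ρ : ℝ) (v : Fin n → ℝ) :
    dotProduct (star v) ((A - ρ • Jmat n) *ᵥ v)
      = qd A v - ρ * qd (Jmat n) v := by
  simp only [star_trivial, qd, Matrix.sub_mulVec, Matrix.smul_mulVec,
    dotProduct_sub, dotProduct_smul, smul_eq_mul]

end SLem

/-- A symmetric matrix `A` is Lorentz-copositive iff `A - ρJ` is positive semidefinite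
for some `ρ ≥ 0`, where `J = diag(1, -1, …, -1)`. -/
theorem stmt2 (n : ℕ) [NeZero n] (hn : 2 ≤ n)
    (A : Matrix (Fin n) (Fin n) ℝ) (hA : A.IsSymm) :
    (∀ x ∈ lorentzCone n, 0 ≤ quadForm A x) ↔
      ∃ ρ : ℝ, 0 ≤ ρ ∧
        (A - ρ • Matrix.diagonal (fun i : Fin n => if i = 0 then (1 : ℝ) else -1)).PosSemidef := by
  open SLem in
  have hJeq : (Matrix.diagonal fun i : Fin n => if i = 0 then (1:ℝ) else -1) = Jmat n := rfl
  constructor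
  · intro hcop
    have hq : ∀ v : Fin n → ℝ, 0 ≤ qd (Jmat n) v → 0 ≤ qd A v := by
      intro v hv
      rw [qd_J] at hv
      set T : ℝ := ∑ i ∈ Finset.univ.erase 0, v i ^ 2 with hT
      have hT0 : 0 ≤ T := tail_nonneg v
      have habs : Real.sqrt T ≤ |v 0| := by
        rw [← Real.sqrt_sq_eq_abs]
        exact Real.sqrt_le_sqrt (by linarith)
      rcases le_or_gt 0 (v 0) with h0 | h0
      · have hx : (WithLp.equiv 2 (Fin n → ℝ)).symm v ∈ lorentzCone n :=
          (mem_lorentz_iff v).mpr (habs.trans_eq (abs_of_nonneg h0))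
        have h := hcop _ hx
        rwa [quadForm_eq', Equiv.apply_symm_apply] at h
      · have hneg : Real.sqrt (∑ i ∈ Finset.univ.erase 0, (-v) i ^ 2) ≤ (-v) 0 := by
          have he : (∑ i ∈ Finset.univ.erase 0, (-v) i ^ 2) = T := by
            refine Finset.sum_congr rfl fun i _ => by simp [hT]
          rw [he]
          simpa using habs.trans_eq (abs_of_neg h0)
        have hx : (WithLp.equiv 2 (Fin n → ℝ)).symm (-v) ∈ lorentzCone n :=
          (mem_lorentz_iff (-v)).mpr hneg
        have h := hcop _ hx
        rwa [quadForm_eq', Equiv.apply_symm_apply, qd_neg] at h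
    obtain ⟨ρ, hρ0, hρ⟩ := slemma A hA hq
    refine ⟨ρ, hρ0, Matrix.posSemidef_iff_dotProduct_mulVec.mpr ⟨?_, ?_⟩⟩
    · simp only [Matrix.IsHermitian, Matrix.conjTranspose_sub, Matrix.conjTranspose_smul,
        Matrix.conjTranspose_eq_transpose_of_trivial, Matrix.diagonal_transpose,
        star_trivial]
      rw [Matrix.transpose_sub, Matrix.transpose_smul, hA.eq, Matrix.diagonal_transpose]
    · intro v
      rw [hJeq, qd_sub_smul]
      have h := hρ v
      linarith
  · rintro ⟨ρ, hρ0, hpsd⟩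
    intro x hx
    set v : Fin n → ℝ := WithLp.equiv 2 (Fin n → ℝ) x with hv
    have hxv : (WithLp.equiv 2 (Fin n → ℝ)).symm v = x := Equiv.symm_apply_apply _ _
    have hmem : Real.sqrt (∑ i ∈ Finset.univ.erase 0, v i ^ 2) ≤ v 0 := by
      rw [← mem_lorentz_iff, hxv]; exact hx
    have hT0 : 0 ≤ ∑ i ∈ Finset.univ.erase 0, v i ^ 2 := tail_nonneg v
    have h00 : 0 ≤ v 0 := (Real.sqrt_nonneg _).trans hmem
    have hg : 0 ≤ qd (Jmat n) v := by
      rw [qd_J]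
      have hle : (∑ i ∈ Finset.univ.erase 0, v i ^ 2) ≤ v 0 ^ 2 := by
        calc (∑ i ∈ Finset.univ.erase 0, v i ^ 2)
            = Real.sqrt (∑ i ∈ Finset.univ.erase 0, v i ^ 2) ^ 2 :=
              (Real.sq_sqrt hT0).symm
          _ ≤ v 0 ^ 2 := pow_le_pow_left₀ (Real.sqrt_nonneg _) hmem 2
      linarith
    have hps := hpsd.dotProduct_mulVec_nonneg v
    rw [hJeq, qd_sub_smul] at hps
    rw [quadForm_eq', ← hv]
    nlinarith
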